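/- arXiv:1909.03796 — 3 statements merged into one kernel-verified Lean document; each statement's English description precedes it below -/
import Mathlib

section
/- (Proposition 1, level part.) Suppose ν_1, ..., ν_n are independent real-valued random variables, each with an atomless (continuous) distribution, and each symmetric: ν_i has the same distribution as −ν_i for every 1 ≤ i ≤ n. Then for every n ∈ ℕ, the sign-flipping test that rejects when T_1^n > T^n_{[1−α]} has rejection probability at most α. -/
open MeasureTheory ProbabilityTheory Filter
open scoped ENNReal NNReal


noncomputable def orderStat {w : ℕ} (T : Fin w → ℝ) (k : ℕ) : ℝ :=
  if h : k - 1 < w then T (Tuple.sort T ⟨k - 1, h⟩) else 0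

lemma card_filter_comp_equiv {w : ℕ} (σ : Equiv.Perm (Fin w)) (p : Fin w → Prop)
    [DecidablePred p] :
    (Finset.univ.filter fun k => p (σ k)).card = (Finset.univ.filter p).card := by
  apply Finset.card_bij' (fun k _ => σ k) (fun k _ => σ.symm k) <;> simp

lemma orderStat_lt_iff {w K : ℕ} (f : Fin w → ℝ) (hK1 : 1 ≤ K) (hKw : K ≤ w) (j : Fin w) :
    orderStat f K < f j ↔ K ≤ (Finset.univ.filter fun k => f k < f j).card := by
  have h : K - 1 < w := by omega
  have hos : orderStat f K = f (Tuple.sort f ⟨K - 1, h⟩) := dif_pos h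
  set τ := Tuple.sort f with hτ
  set m : Fin w := ⟨K - 1, h⟩ with hm
  have hcard : (Finset.univ.filter fun k => f k < f j).card
      = (Finset.univ.filter fun i => f (τ i) < f j).card :=
    (card_filter_comp_equiv τ _).symm
  rw [hos, hcard]
  constructor
  · intro hlt
    have hsub : Finset.Iic m ⊆ Finset.univ.filter fun i => f (τ i) < f j := by
      intro i hi
      simp only [Finset.mem_Iic] at hi
      simp only [Finset.mem_filter, Finset.mem_univ, true_and]
      exact lt_of_le_of_lt (Tuple.monotone_sort f hi) hlt
    have hc := Finset.card_le_card hsub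
    rw [Fin.card_Iic] at hc
    simp only [hm] at hc
    omega
  · intro hcard'
    by_contra hle
    push_neg at hle
    have hsub : (Finset.univ.filter fun i => f (τ i) < f j) ⊆ Finset.Iio m := by
      intro i hi
      simp only [Finset.mem_filter, Finset.mem_univ, true_and] at hi
      simp only [Finset.mem_Iio]
      by_contra hmi
      push_neg at hmi
      exact absurd (lt_of_lt_of_le hi hle) (not_lt.mpr (Tuple.monotone_sort f hmi))
    have hc := Finset.card_le_card hsub
    rw [Fin.card_Iio] at hc
    simp only [hm] at hc
    omega

lemma card_reject_le {w K : ℕ} (f : Fin w → ℝ) :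
    (Finset.univ.filter fun j : Fin w =>
      K ≤ (Finset.univ.filter fun k => f k < f j).card).card ≤ w - K := by
  set B := Finset.univ.filter fun j : Fin w =>
      K ≤ (Finset.univ.filter fun k => f k < f j).card with hB
  rcases B.eq_empty_or_nonempty with h | hne
  · simp [h]
  · obtain ⟨j0, hj0B, hmin⟩ := B.exists_min_image f hne
    have hKle : K ≤ (Finset.univ.filter fun k => f k < f j0).card :=
      (Finset.mem_filter.mp hj0B).2
    have hsub : (Finset.univ.filter fun k => f k < f j0) ⊆ Finset.univ \ B := by
      intro k hk
      simp only [Finset.mem_filter, Finset.mem_univ, true_and] at hk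
      simp only [Finset.mem_sdiff, Finset.mem_univ, true_and]
      intro hkB
      exact absurd hk (not_lt.mpr (hmin k hkB))
    have hc := (Finset.card_le_card hsub).trans_eq
      (by rw [Finset.card_sdiff_of_subset (Finset.subset_univ B), Finset.card_univ, Fintype.card_fin])
    have hBw : B.card ≤ w := by
      simpa using (Finset.card_le_card (Finset.subset_univ B)).trans_eq (by simp)
    omega




noncomputable def signLaw : Measure ℝ :=
  (2 : ℝ≥0∞)⁻¹ • Measure.dirac (-1) + (2 : ℝ≥0∞)⁻¹ • Measure.dirac 1

lemma law_map_pi {ι : Type*} [Fintype ι] {Ω : Type*} [MeasureSpace Ω]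
    [IsProbabilityMeasure (ℙ : Measure Ω)] (f : ι → Ω → ℝ)
    (hf : ∀ i, Measurable (f i))
    (h : iIndepFun f ℙ) :
    Measure.map (fun ω i => f i ω) ℙ = Measure.pi (fun i => Measure.map (f i) ℙ) := by
  haveI : ∀ i, IsProbabilityMeasure (Measure.map (f i) ℙ) :=
    fun i => Measure.isProbabilityMeasure_map (hf i).aemeasurable
  refine (Measure.pi_eq fun t ht => ?_).symm
  rw [Measure.map_apply (measurable_pi_iff.mpr hf) (MeasurableSet.univ_pi ht)]
  have hset : (fun ω i => f i ω) ⁻¹' Set.pi Set.univ t = ⋂ i ∈ Finset.univ, f i ⁻¹' t i := by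
    ext ω; simp [Set.mem_pi]
  rw [hset, h.measure_inter_preimage_eq_mul Finset.univ (fun i _ => ht i)]
  exact Finset.prod_congr rfl fun i _ => (Measure.map_apply (hf i) (ht i)).symm

lemma map_finsetSum' {α β : Type*} [MeasurableSpace α] [MeasurableSpace β] {f : α → β}
    (hf : Measurable f) {ι : Type*} (I : Finset ι) (μ : ι → Measure α) :
    Measure.map f (∑ i ∈ I, μ i) = ∑ i ∈ I, Measure.map f (μ i) := by
  simp_rw [← Measure.mapₗ_apply_of_measurable hf]
  exact map_sum (Measure.mapₗ f) μ I

lemma isFiniteMeasure_finsetSum {α : Type*} [MeasurableSpace α] {ι : Type*} (I : Finset ι)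
    (ν : ι → Measure α) [∀ i, IsFiniteMeasure (ν i)] : IsFiniteMeasure (∑ i ∈ I, ν i) := by
  constructor
  rw [Measure.finset_sum_apply]
  exact ENNReal.sum_lt_top.mpr fun i _ => measure_lt_top _ _

lemma prod_finsetSum {α β : Type*} [MeasurableSpace α] [MeasurableSpace β]
    (μ : Measure α) [SFinite μ] {ι : Type*} (I : Finset ι) (ν : ι → Measure β)
    [∀ i, IsFiniteMeasure (ν i)] :
    μ.prod (∑ i ∈ I, ν i) = ∑ i ∈ I, μ.prod (ν i) := by
  classical
  induction I using Finset.induction_on with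
  | empty => simp [Measure.prod_zero]
  | @insert a s ha ih =>
    haveI := isFiniteMeasure_finsetSum s ν
    rw [Finset.sum_insert ha, Measure.prod_add, ih, Finset.sum_insert ha]

lemma prod_smul_right {α β : Type*} [MeasurableSpace α] [MeasurableSpace β]
    (μ : Measure α) [SFinite μ] (ν : Measure β) [IsFiniteMeasure ν] (c : ℝ≥0∞) (hc : c ≠ ∞) :
    μ.prod (c • ν) = c • μ.prod ν := by
  haveI : IsFiniteMeasure (c • ν) := by
    constructor
    rw [Measure.smul_apply, smul_eq_mul]
    exact ENNReal.mul_lt_top hc.lt_top (measure_lt_top ν _)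
  ext s hs
  rw [Measure.smul_apply, Measure.prod_apply hs, Measure.prod_apply hs, smul_eq_mul,
    ← lintegral_const_mul' _ _ hc]
  simp [Measure.smul_apply, smul_eq_mul]

lemma pi_mix {ι : Type*} [Fintype ι] [DecidableEq ι] (a : ι → Bool → ℝ) :
    Measure.pi (fun s => (2 : ℝ≥0∞)⁻¹ • Measure.dirac (a s false)
        + (2 : ℝ≥0∞)⁻¹ • Measure.dirac (a s true))
      = ((2 : ℝ≥0∞) ^ Fintype.card ι)⁻¹ •
          ∑ ε : ι → Bool, Measure.dirac (fun s => a s (ε s)) := by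
  classical
  haveI : ∀ s : ι, IsProbabilityMeasure ((2 : ℝ≥0∞)⁻¹ • Measure.dirac (a s false)
      + (2 : ℝ≥0∞)⁻¹ • Measure.dirac (a s true)) := by
    intro s
    constructor
    simp [ENNReal.inv_two_add_inv_two]
  refine Measure.pi_eq fun t ht => ?_
  rw [Measure.smul_apply, Measure.finset_sum_apply, smul_eq_mul]
  have hdirac : ∀ ε : ι → Bool, Measure.dirac (fun s => a s (ε s)) (Set.pi Set.univ t)
      = ∏ s : ι, (if a s (ε s) ∈ t s then (1 : ℝ≥0∞) else 0) := by
    intro ε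
    rw [Measure.dirac_apply' _ (MeasurableSet.univ_pi ht), Set.indicator_apply,
      Finset.prod_boole]
    simp [Set.mem_univ_pi]
  simp_rw [hdirac]
  have hc : ((2 : ℝ≥0∞) ^ Fintype.card ι)⁻¹ = ∏ _s : ι, (2 : ℝ≥0∞)⁻¹ := by
    rw [Finset.prod_const, Finset.card_univ, ← ENNReal.inv_pow]
  rw [hc, Finset.mul_sum]
  simp_rw [← Finset.prod_mul_distrib]
  have hswap := Finset.prod_univ_sum (fun _ : ι => (Finset.univ : Finset Bool))
    (fun s b => (2 : ℝ≥0∞)⁻¹ * (if a s b ∈ t s then (1 : ℝ≥0∞) else 0))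
  rw [Fintype.piFinset_univ] at hswap
  rw [← hswap]
  refine Finset.prod_congr rfl fun s _ => ?_
  rw [Fintype.sum_bool]
  simp only [Measure.coe_add, Measure.coe_smul, Pi.add_apply, Pi.smul_apply, smul_eq_mul]
  rw [Measure.dirac_apply' _ (ht s), Measure.dirac_apply' _ (ht s)]
  simp only [Set.indicator_apply, Pi.one_apply]
  ring

lemma pi_coord_ae {ιS : Type*} [Fintype ιS] (μ : ιS → Measure ℝ)
    [∀ s, IsProbabilityMeasure (μ s)] (s0 : ιS) (A : Set ℝ) (hA : MeasurableSet A)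
    (h : μ s0 Aᶜ = 0) : ∀ᵐ x ∂(Measure.pi μ), x s0 ∈ A := by
  classical
  rw [ae_iff]
  have hset : {x : ιS → ℝ | ¬ x s0 ∈ A}
      = Set.pi Set.univ (Function.update (fun _ : ιS => (Set.univ : Set ℝ)) s0 Aᶜ) := by
    ext x
    simp only [Set.mem_setOf_eq, Set.mem_univ_pi, Function.update_apply]
    constructor
    · intro hx t
      by_cases ht : t = s0
      · subst ht; simp [hx]
      · simp [ht]
    · intro hx
      have := hx s0
      simpa using this
  rw [hset, Measure.pi_pi]
  exact Finset.prod_eq_zero (Finset.mem_univ s0) (by simpa using h)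
variable {n w : ℕ}

lemma map_psi_pi [NeZero w] (j0 : Fin w) (hj0 : j0 ≠ 0)
    (μn : Fin n → Measure ℝ) [hPn : ∀ i, IsProbabilityMeasure (μn i)]
    (hsym : ∀ i, Measure.map (fun x : ℝ => -x) (μn i) = μn i)
    (μR : Fin w × Fin n → Measure ℝ)
    (hμR : μR = fun p : Fin w × Fin n => if p.1 = 0 then Measure.dirac 1 else signLaw) :
    Measure.map
      (fun x : (Fin n ⊕ Fin w × Fin n) → ℝ =>
        (Sum.elim (fun i => x (.inr (j0, i)) * x (.inl i))
          (fun p : Fin w × Fin n =>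
            if p.1 = 0 ∨ p.1 = j0 then x (.inr p) else x (.inr p) * x (.inr (j0, p.2)))
          : (Fin n ⊕ Fin w × Fin n) → ℝ))
      (Measure.pi (Sum.elim μn μR))
    = Measure.pi (Sum.elim μn μR) := by
  classical
  set a : Fin w × Fin n → Bool → ℝ :=
    fun p b => if p.1 = 0 then 1 else if b then 1 else -1 with ha
  have hμR' : μR = fun p => (2 : ℝ≥0∞)⁻¹ • Measure.dirac (a p false)
      + (2 : ℝ≥0∞)⁻¹ • Measure.dirac (a p true) := by
    rw [hμR]
    funext p
    by_cases hp : p.1 = 0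
    · simp only [ha, if_pos hp]
      rw [← add_smul, ENNReal.inv_two_add_inv_two, one_smul]
    · simp only [ha, if_neg hp, signLaw]
      norm_num
  haveI hμRP : ∀ p, IsProbabilityMeasure (μR p) := by
    intro p
    rw [hμR']
    constructor
    simp [ENNReal.inv_two_add_inv_two]
  haveI hSF : ∀ s : Fin n ⊕ Fin w × Fin n, SigmaFinite (Sum.elim μn μR s) := by
    rintro (i | p)
    · exact (inferInstance : SigmaFinite (μn i))
    · exact (inferInstance : SigmaFinite (μR p))
  set Ψ : ((Fin n ⊕ Fin w × Fin n) → ℝ) → ((Fin n ⊕ Fin w × Fin n) → ℝ) :=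
    fun x =>
      (Sum.elim (fun i => x (.inr (j0, i)) * x (.inl i))
        (fun p : Fin w × Fin n =>
          if p.1 = 0 ∨ p.1 = j0 then x (.inr p) else x (.inr p) * x (.inr (j0, p.2)))) with hΨdef
  have hΨmeas : Measurable Ψ := by
    apply measurable_pi_iff.mpr
    rintro (i | p)
    · simp only [hΨdef, Sum.elim_inl]
      exact (measurable_pi_apply _).mul (measurable_pi_apply _)
    · simp only [hΨdef, Sum.elim_inr]
      by_cases h : p.1 = 0 ∨ p.1 = j0
      · simp only [if_pos h]
        exact measurable_pi_apply _
      · simp only [if_neg h]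
        exact (measurable_pi_apply _).mul (measurable_pi_apply _)
  set ψ : ((Fin n → ℝ) × (Fin w × Fin n → ℝ)) → ((Fin n → ℝ) × (Fin w × Fin n → ℝ)) :=
    fun q =>
      (fun i => q.2 (j0, i) * q.1 i,
       fun p => if p.1 = 0 ∨ p.1 = j0 then q.2 p else q.2 p * q.2 (j0, p.2)) with hψdef
  have hψmeas : Measurable ψ := by
    apply Measurable.prod
    · apply measurable_pi_iff.mpr
      intro i
      exact ((measurable_pi_apply _).comp measurable_snd).mul
        ((measurable_pi_apply _).comp measurable_fst)
    · apply measurable_pi_iff.mpr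
      intro p
      by_cases h : p.1 = 0 ∨ p.1 = j0
      · simp only [hψdef, if_pos h]
        exact (measurable_pi_apply _).comp measurable_snd
      · simp only [hψdef, if_neg h]
        exact ((measurable_pi_apply _).comp measurable_snd).mul
          ((measurable_pi_apply _).comp measurable_snd)
  set e := MeasurableEquiv.sumPiEquivProdPi (fun _ : Fin n ⊕ Fin w × Fin n => ℝ) with he
  have hmp := measurePreserving_sumPiEquivProdPi_symm (Sum.elim μn μR)
  have hcomm : Ψ ∘ ⇑e.symm = ⇑e.symm ∘ ψ := by
    funext q
    funext s
    cases s with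
    | inl i => rfl
    | inr p => rfl
  -- the core product-measure identity
  have hψP : Measure.map ψ ((Measure.pi μn).prod (Measure.pi μR))
      = (Measure.pi μn).prod (Measure.pi μR) := by
    set c : ℝ≥0∞ := ((2 : ℝ≥0∞) ^ Fintype.card (Fin w × Fin n))⁻¹ with hc
    have hcne : c ≠ ∞ := ENNReal.inv_ne_top.mpr (pow_ne_zero _ two_ne_zero)
    have hρ : Measure.pi μR
        = c • ∑ ε : Fin w × Fin n → Bool, Measure.dirac (fun p => a p (ε p)) := by
      rw [hμR']
      exact pi_mix a
    set ι : (Fin w × Fin n → Bool) → (Fin w × Fin n → Bool) :=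
      fun ε p => if p.1 = 0 ∨ p.1 = j0 then ε p else (ε p == ε (j0, p.2)) with hiota
    have hinv : Function.Involutive ι := by
      intro ε
      funext p
      by_cases h : p.1 = 0 ∨ p.1 = j0
      · simp [hiota, h]
      · have hj : (j0, p.2).1 = 0 ∨ ((j0, p.2) : Fin w × Fin n).1 = j0 := Or.inr rfl
        simp only [hiota, if_neg h, if_pos hj]
        cases ε p <;> cases ε (j0, p.2) <;> simp
    have hflip : ∀ ε : Fin w × Fin n → Bool,
        Measure.map (fun v (i : Fin n) => a (j0, i) (ε (j0, i)) * v i) (Measure.pi μn)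
          = Measure.pi μn := by
      intro ε
      refine (measurePreserving_pi μn μn fun i => ?_).map_eq
      have hval : a (j0, i) (ε (j0, i)) = 1 ∨ a (j0, i) (ε (j0, i)) = -1 := by
        simp only [ha, hj0, if_false]
        cases ε (j0, i) <;> simp
      rcases hval with hv | hv
      · have hfun : (HMul.hMul (a (j0, i) (ε (j0, i))) : ℝ → ℝ) = id := by
          funext x; simp [hv]
        exact hfun ▸ MeasurePreserving.id (μn i)
      · have hfun : (HMul.hMul (a (j0, i) (ε (j0, i))) : ℝ → ℝ) = fun x : ℝ => -x := by
          funext x; simp [hv]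
        exact hfun ▸ (⟨measurable_neg, hsym i⟩ : MeasurePreserving (fun x : ℝ => -x) (μn i) (μn i))
    have hkey : ∀ ε : Fin w × Fin n → Bool,
        Measure.map ψ ((Measure.pi μn).prod (Measure.dirac (fun p => a p (ε p))))
          = (Measure.pi μn).prod (Measure.dirac (fun p => a p (ι ε p))) := by
      intro ε
      rw [Measure.prod_dirac, Measure.prod_dirac,
        Measure.map_map hψmeas measurable_prodMk_right]
      have hflipmeas : Measurable (fun (v : Fin n → ℝ) (i : Fin n) => a (j0, i) (ε (j0, i)) * v i) := by
        apply measurable_pi_iff.mpr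
        intro i
        exact (measurable_pi_apply i).const_mul _
      have hfun : (ψ ∘ fun v => (v, fun p => a p (ε p)))
          = (fun u : Fin n → ℝ => (u, fun p => a p (ι ε p))) ∘ (fun (v : Fin n → ℝ) (i : Fin n) => a (j0, i) (ε (j0, i)) * v i) := by
        funext v
        simp only [Function.comp_apply, hψdef]
        refine Prod.ext rfl ?_
        funext p
        by_cases h : p.1 = 0 ∨ p.1 = j0
        · simp only [if_pos h, hiota]
        · have hp1 : ¬ p.1 = 0 := fun hc0 => h (Or.inl hc0)
          simp only [if_neg h, hiota, ha, if_neg hp1, if_neg hj0]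
          cases ε p <;> cases ε (j0, p.2) <;> norm_num
      rw [hfun, ← Measure.map_map measurable_prodMk_right hflipmeas,
        hflip ε]
    calc Measure.map ψ ((Measure.pi μn).prod (Measure.pi μR))
        = c • ∑ ε : Fin w × Fin n → Bool,
            Measure.map ψ ((Measure.pi μn).prod (Measure.dirac (fun p => a p (ε p)))) := by
          haveI := isFiniteMeasure_finsetSum Finset.univ
            (fun ε : Fin w × Fin n → Bool => Measure.dirac (fun p => a p (ε p)))
          rw [hρ, prod_smul_right _ _ c hcne, Measure.map_smul,
            prod_finsetSum, map_finsetSum' hψmeas]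
      _ = c • ∑ ε : Fin w × Fin n → Bool,
            (Measure.pi μn).prod (Measure.dirac (fun p => a p (ι ε p))) := by
          simp_rw [hkey]
      _ = c • ∑ ε : Fin w × Fin n → Bool,
            (Measure.pi μn).prod (Measure.dirac (fun p => a p (ε p))) := by
          congr 1
          exact Fintype.sum_bijective ι hinv.bijective _ _ (fun ε => rfl)
      _ = (Measure.pi μn).prod (Measure.pi μR) := by
          haveI := isFiniteMeasure_finsetSum Finset.univ
            (fun ε : Fin w × Fin n → Bool => Measure.dirac (fun p => a p (ε p)))
          rw [hρ, prod_smul_right _ _ c hcne, prod_finsetSum]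
  have hP1 : (Measure.pi fun i => Sum.elim μn μR (Sum.inl i)) = Measure.pi μn := rfl
  have hP2 : (Measure.pi fun p => Sum.elim μn μR (Sum.inr p)) = Measure.pi μR := rfl
  conv_lhs => rw [← hmp.map_eq]
  rw [Measure.map_map hΨmeas e.symm.measurable, hP1, hP2, hcomm,
    ← Measure.map_map e.symm.measurable hψmeas, hψP, ← hP1, ← hP2]
  exact hmp.map_eq

/-- **Proposition 1 (level part).** If `ν_1, ..., ν_n` are independent, continuous and
symmetric about `0`, then for every `n` the sign-flipping test that rejects when
`T_1^n > T^n_{[1-α]}` has rejection probability at most `α`. -/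
theorem statement6
    {Ω : Type*} [MeasureSpace Ω] [IsProbabilityMeasure (ℙ : Measure Ω)]
    (w n : ℕ) [NeZero w] (hw : 2 ≤ w) (α : ℝ) (hα : α ∈ Set.Ico (0 : ℝ) 1)
    (ν : Fin n → Ω → ℝ) (g : Fin w → Fin n → Ω → ℝ)
    (hν_meas : ∀ i, Measurable (ν i))
    (hν_atomless : ∀ i, ∀ x : ℝ, Measure.map (ν i) ℙ {x} = 0)
    (hν_symm : ∀ i, Measure.map (fun ω => -ν i ω) ℙ = Measure.map (ν i) ℙ)
    (hg_meas : ∀ j i, Measurable (g j i))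
    (hg0 : ∀ i ω, g 0 i ω = 1)
    (hg_law : ∀ j : Fin w, j ≠ 0 → ∀ i, Measure.map (g j i) ℙ = signLaw)
    (hindep : iIndepFun
      (Sum.elim ν fun p : Fin w × Fin n => g p.1 p.2) ℙ) :
    (ℙ {ω | (Real.sqrt n)⁻¹ * ∑ i : Fin n, g 0 i ω * ν i ω >
        orderStat (fun j : Fin w => (Real.sqrt n)⁻¹ * ∑ i : Fin n, g j i ω * ν i ω)
          ⌈(1 - α) * (w : ℝ)⌉₊}).toReal ≤ α := by
  classical
  obtain ⟨hα0, hα1⟩ := hα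
  have hwpos : 0 < w := Nat.lt_of_lt_of_le (by norm_num) hw
  have hwR : (0 : ℝ) < w := by exact_mod_cast hwpos
  set K := ⌈(1 - α) * (w : ℝ)⌉₊ with hKdef
  have hK1 : 1 ≤ K := Nat.ceil_pos.mpr (by nlinarith)
  have hKw : K ≤ w := Nat.ceil_le.mpr (by nlinarith)
  set F : (Fin n ⊕ Fin w × Fin n) → Ω → ℝ :=
    Sum.elim ν fun p : Fin w × Fin n => g p.1 p.2 with hF
  have hFmeas : ∀ s, Measurable (F s) := by rintro (i | p); exacts [hν_meas i, hg_meas p.1 p.2]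
  set X : Ω → (Fin n ⊕ Fin w × Fin n) → ℝ := fun ω s => F s ω with hX
  have hXmeas : Measurable X := measurable_pi_iff.mpr hFmeas
  set T : Ω → Fin w → ℝ := fun ω j => (Real.sqrt n)⁻¹ * ∑ i : Fin n, g j i ω * ν i ω with hT
  set Φ : ((Fin n ⊕ Fin w × Fin n) → ℝ) → Fin w → ℝ :=
    fun x j => (Real.sqrt n)⁻¹ * ∑ i : Fin n, x (.inr (j, i)) * x (.inl i) with hΦ
  have hTX : T = Φ ∘ X := rfl
  have hΦmeas : Measurable Φ := by
    apply measurable_pi_iff.mpr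
    intro j
    simp only [hΦ]
    have hs : Measurable fun x : (Fin n ⊕ Fin w × Fin n) → ℝ =>
        ∑ i : Fin n, x (.inr (j, i)) * x (.inl i) :=
      Finset.measurable_sum Finset.univ fun i _ =>
        (measurable_pi_apply _).mul (measurable_pi_apply _)
    exact hs.const_mul _
  have hTmeas : Measurable T := by rw [hTX]; exact hΦmeas.comp hXmeas
  set B : Fin w → Set (Fin w → ℝ) :=
    fun j => {f | K ≤ (Finset.univ.filter fun k => f k < f j).card} with hB
  have hBmeas : ∀ j, MeasurableSet (B j) := by
    intro j
    have hBeq : B j = (fun f : Fin w → ℝ => ∑ k : Fin w, if f k < f j then (1 : ℝ) else 0)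
        ⁻¹' (Set.Ici (K : ℝ)) := by
      ext f
      simp only [hB, Set.mem_setOf_eq, Set.mem_preimage, Set.mem_Ici, Finset.sum_boole]
      constructor <;> intro h <;> exact_mod_cast h
    rw [hBeq]
    have hm : Measurable fun f : Fin w → ℝ => ∑ k : Fin w, if f k < f j then (1 : ℝ) else 0 :=
      Finset.measurable_sum _ fun k _ =>
        Measurable.ite (measurableSet_lt (measurable_pi_apply k) (measurable_pi_apply j))
          measurable_const measurable_const
    exact hm measurableSet_Ici
  have hEvent : {ω | (Real.sqrt n)⁻¹ * ∑ i : Fin n, g 0 i ω * ν i ω >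
        orderStat (fun j : Fin w => (Real.sqrt n)⁻¹ * ∑ i : Fin n, g j i ω * ν i ω) K}
      = T ⁻¹' (B 0) := by
    ext ω
    simp only [Set.mem_setOf_eq, Set.mem_preimage, hB, hT, gt_iff_lt]
    exact orderStat_lt_iff (fun j : Fin w => (Real.sqrt n)⁻¹ * ∑ i : Fin n, g j i ω * ν i ω)
      hK1 hKw 0
  haveI hProb : ∀ s, IsProbabilityMeasure (Measure.map (F s) ℙ) :=
    fun s => Measure.isProbabilityMeasure_map (hFmeas s).aemeasurable
  have hlaw : Measure.map X ℙ = Measure.pi fun s => Measure.map (F s) ℙ :=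
    law_map_pi F hFmeas hindep
  set μn : Fin n → Measure ℝ := fun i => Measure.map (ν i) ℙ with hμn
  set μR : Fin w × Fin n → Measure ℝ :=
    fun p => if p.1 = 0 then Measure.dirac 1 else signLaw with hμR
  haveI hμnP : ∀ i, IsProbabilityMeasure (μn i) :=
    fun i => Measure.isProbabilityMeasure_map (hν_meas i).aemeasurable
  haveI hμRP : ∀ p, IsProbabilityMeasure (μR p) := by
    intro p
    by_cases hp : p.1 = 0
    · have h' : μR p = Measure.dirac 1 := by simp [hμR, hp]
      rw [h']; infer_instance
    · have h' : μR p = signLaw := by simp [hμR, hp]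
      rw [h']
      constructor
      simp [signLaw, ENNReal.inv_two_add_inv_two]
  haveI hElimP : ∀ s : Fin n ⊕ Fin w × Fin n, IsProbabilityMeasure (Sum.elim μn μR s) := by
    rintro (i | p)
    · exact hμnP i
    · exact hμRP p
  have hmarg : (fun s => Measure.map (F s) ℙ) = Sum.elim μn μR := by
    funext s
    rcases s with i | ⟨j, i⟩
    · rfl
    · by_cases hj : j = 0
      · subst hj
        have hg0' : F (.inr ((0 : Fin w), i)) = fun _ => (1 : ℝ) := funext fun ω => hg0 i ω
        have hR : Sum.elim μn μR (.inr ((0 : Fin w), i)) = Measure.dirac 1 := by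
          simp [hμR]
        rw [hR, hg0', Measure.map_const, measure_univ, one_smul]
      · have hR : Sum.elim μn μR (.inr (j, i)) = signLaw := by simp [hμR, hj]
        rw [hR]
        exact hg_law j hj i
  have hμnsym : ∀ i, Measure.map (fun x : ℝ => -x) (μn i) = μn i := by
    intro i
    calc Measure.map (fun x : ℝ => -x) (μn i)
        = Measure.map ((fun x : ℝ => -x) ∘ ν i) ℙ := Measure.map_map measurable_neg (hν_meas i)
      _ = Measure.map (ν i) ℙ := hν_symm i
  -- invariance of the rejection probabilities
  have hswap : ∀ j0 : Fin w, ℙ (T ⁻¹' (B j0)) = ℙ (T ⁻¹' (B 0)) := by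
    intro j0
    by_cases hj0 : j0 = 0
    · rw [hj0]
    · set σ := Equiv.swap (0 : Fin w) j0 with hσ
      set R : (Fin w → ℝ) → (Fin w → ℝ) := fun f => f ∘ σ with hR
      have hRmeas : Measurable R := measurable_pi_iff.mpr fun j => measurable_pi_apply _
      have hBR : B j0 = R ⁻¹' (B 0) := by
        ext f
        have hσ0 : σ 0 = j0 := Equiv.swap_apply_left _ _
        simp only [hB, Set.mem_setOf_eq, Set.mem_preimage, hR, Function.comp, hσ0]
        rw [card_filter_comp_equiv σ (fun k => f k < f j0)]
      set Ψ : ((Fin n ⊕ Fin w × Fin n) → ℝ) → ((Fin n ⊕ Fin w × Fin n) → ℝ) :=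
        fun x =>
          (Sum.elim (fun i => x (.inr (j0, i)) * x (.inl i))
            (fun p : Fin w × Fin n =>
              if p.1 = 0 ∨ p.1 = j0 then x (.inr p) else x (.inr p) * x (.inr (j0, p.2)))) with hΨ
      have hΨmeas : Measurable Ψ := by
        apply measurable_pi_iff.mpr
        rintro (i | p)
        · simp only [hΨ, Sum.elim_inl]
          exact (measurable_pi_apply _).mul (measurable_pi_apply _)
        · simp only [hΨ, Sum.elim_inr]
          by_cases h : p.1 = 0 ∨ p.1 = j0
          · simp only [if_pos h]
            exact measurable_pi_apply _
          · simp only [if_neg h]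
            exact (measurable_pi_apply _).mul (measurable_pi_apply _)
      have hmapΨ : Measure.map Ψ (Measure.pi (Sum.elim μn μR))
          = Measure.pi (Sum.elim μn μR) := map_psi_pi j0 hj0 μn hμnsym μR hμR
      -- a.e. identities
      have hone : ∀ᵐ x ∂(Measure.pi (Sum.elim μn μR)), ∀ i : Fin n,
          x (.inr ((0 : Fin w), i)) = 1 := by
        rw [ae_all_iff]
        intro i
        have h0 : (Sum.elim μn μR) (.inr ((0 : Fin w), i)) ({(1 : ℝ)})ᶜ = 0 := by
          have hR : Sum.elim μn μR (.inr ((0 : Fin w), i)) = Measure.dirac 1 := by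
            simp [hμR]
          rw [hR, Measure.dirac_apply' _ (measurableSet_singleton (1 : ℝ)).compl]
          simp
        filter_upwards [pi_coord_ae (Sum.elim μn μR) (.inr ((0 : Fin w), i)) {(1 : ℝ)}
          (measurableSet_singleton _) h0] with x hx
        simpa using hx
      have hpm : ∀ᵐ x ∂(Measure.pi (Sum.elim μn μR)), ∀ p : Fin w × Fin n,
          x (.inr p) = 1 ∨ x (.inr p) = -1 := by
        rw [ae_all_iff]
        intro p
        have hAm : MeasurableSet ({(1 : ℝ), -1}) :=
          ((Set.finite_singleton (-1 : ℝ)).insert 1).measurableSet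
        have h0 : (Sum.elim μn μR) (.inr p) ({(1 : ℝ), -1})ᶜ = 0 := by
          by_cases hp : p.1 = 0
          · have hR : Sum.elim μn μR (.inr p) = Measure.dirac 1 := by simp [hμR, hp]
            rw [hR, Measure.dirac_apply' _ hAm.compl]
            simp
          · have hR : Sum.elim μn μR (.inr p) = signLaw := by simp [hμR, hp]
            rw [hR]
            simp only [signLaw, Measure.coe_add, Measure.coe_smul, Pi.add_apply,
              Pi.smul_apply, smul_eq_mul]
            rw [Measure.dirac_apply' _ hAm.compl, Measure.dirac_apply' _ hAm.compl]
            simp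
        filter_upwards [pi_coord_ae (Sum.elim μn μR) (.inr p) {(1 : ℝ), -1} hAm h0] with x hx
        simpa using hx
      have hae : (fun x => Φ x ∘ σ) =ᵐ[Measure.pi (Sum.elim μn μR)] (Φ ∘ Ψ) := by
        filter_upwards [hone, hpm] with x h1 h2
        funext j
        show Φ x (σ j) = Φ (Ψ x) j
        by_cases hj0' : j = 0
        · subst hj0'
          have hσ0 : σ 0 = j0 := Equiv.swap_apply_left _ _
          simp only [hσ0, hΦ, hΨ, Sum.elim_inl, Sum.elim_inr]
          congr 1
          refine Finset.sum_congr rfl fun i _ => ?_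
          rw [if_pos (Or.inl (trivial : True)), h1 i]
          ring
        · by_cases hjj : j = j0
          · have hσr : σ j = 0 := by rw [hjj]; exact Equiv.swap_apply_right _ _
            simp only [hσr, hΦ, hΨ, Sum.elim_inl, Sum.elim_inr]
            congr 1
            refine Finset.sum_congr rfl fun i _ => ?_
            rw [if_pos (Or.inr hjj), h1 i, hjj]
            rcases h2 (j0, i) with h | h <;> rw [h] <;> ring
          · have hσe : σ j = j := Equiv.swap_apply_of_ne_of_ne hj0' hjj
            simp only [hσe, hΦ, hΨ, Sum.elim_inl, Sum.elim_inr]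
            congr 1
            refine Finset.sum_congr rfl fun i _ => ?_
            rw [if_neg (not_or.mpr ⟨hj0', hjj⟩)]
            rcases h2 (j0, i) with h | h <;> rw [h] <;> ring
      have hΦσmeas : Measurable (fun x => Φ x ∘ σ) :=
        measurable_pi_iff.mpr fun j => (measurable_pi_apply (σ j)).comp hΦmeas
      have hmain : Measure.map (fun ω => T ω ∘ σ) ℙ = Measure.map T ℙ := by
        calc Measure.map (fun ω => T ω ∘ σ) ℙ
            = Measure.map ((fun x => Φ x ∘ σ) ∘ X) ℙ := rfl
          _ = Measure.map (fun x => Φ x ∘ σ) (Measure.map X ℙ) :=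
              (Measure.map_map hΦσmeas hXmeas).symm
          _ = Measure.map (fun x => Φ x ∘ σ) (Measure.pi (Sum.elim μn μR)) := by
              rw [hlaw, hmarg]
          _ = Measure.map (Φ ∘ Ψ) (Measure.pi (Sum.elim μn μR)) := Measure.map_congr hae
          _ = Measure.map Φ (Measure.map Ψ (Measure.pi (Sum.elim μn μR))) :=
              (Measure.map_map hΦmeas hΨmeas).symm
          _ = Measure.map Φ (Measure.pi (Sum.elim μn μR)) := by rw [hmapΨ]
          _ = Measure.map Φ (Measure.map X ℙ) := by rw [hlaw, hmarg]
          _ = Measure.map (Φ ∘ X) ℙ := Measure.map_map hΦmeas hXmeas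
          _ = Measure.map T ℙ := by rw [hTX]
      calc ℙ (T ⁻¹' (B j0)) = ℙ (T ⁻¹' (R ⁻¹' (B 0))) := by rw [hBR]
        _ = ℙ ((R ∘ T) ⁻¹' (B 0)) := by rw [Set.preimage_comp]
        _ = Measure.map (R ∘ T) ℙ (B 0) :=
            (Measure.map_apply (hRmeas.comp hTmeas) (hBmeas 0)).symm
        _ = Measure.map (fun ω => T ω ∘ σ) ℙ (B 0) := rfl
        _ = Measure.map T ℙ (B 0) := by rw [hmain]
        _ = ℙ (T ⁻¹' (B 0)) := Measure.map_apply hTmeas (hBmeas 0)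
  -- the counting bound
  have hmeasA : ∀ j, MeasurableSet (T ⁻¹' (B j)) := fun j => hTmeas (hBmeas j)
  have hcount : ∀ ω, ((Finset.univ.filter fun j : Fin w => T ω ∈ B j).card : ℝ≥0∞)
      ≤ ((w - K : ℕ) : ℝ≥0∞) := by
    intro ω
    have h1 := card_reject_le (K := K) (T ω)
    have h2 : (Finset.univ.filter fun j : Fin w => T ω ∈ B j)
        = Finset.univ.filter fun j : Fin w =>
            K ≤ (Finset.univ.filter fun k => T ω k < T ω j).card := by
      refine Finset.filter_congr fun j _ => ?_
      simp [hB]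
    rw [h2]
    exact_mod_cast h1
  have hsum : ∑ j : Fin w, ℙ (T ⁻¹' (B j)) ≤ ((w - K : ℕ) : ℝ≥0∞) := by
    calc ∑ j : Fin w, ℙ (T ⁻¹' (B j))
        = ∑ j : Fin w, ∫⁻ ω, (T ⁻¹' (B j)).indicator (1 : Ω → ℝ≥0∞) ω ∂ℙ := by
          refine Finset.sum_congr rfl fun j _ => ?_
          rw [lintegral_indicator_one (hmeasA j)]
      _ = ∫⁻ ω, ∑ j : Fin w, (T ⁻¹' (B j)).indicator (1 : Ω → ℝ≥0∞) ω ∂ℙ :=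
          (lintegral_finset_sum _ fun j _ => measurable_one.indicator (hmeasA j)).symm
      _ ≤ ∫⁻ _ω, ((w - K : ℕ) : ℝ≥0∞) ∂ℙ := by
          refine lintegral_mono fun ω => ?_
          have hval : ∑ j : Fin w, (T ⁻¹' (B j)).indicator (1 : Ω → ℝ≥0∞) ω
              = ((Finset.univ.filter fun j : Fin w => T ω ∈ B j).card : ℝ≥0∞) := by
            rw [← Finset.sum_boole]
            refine Finset.sum_congr rfl fun j _ => ?_
            simp [Set.indicator_apply, Set.mem_preimage]
          rw [hval]
          exact hcount ω
      _ = ((w - K : ℕ) : ℝ≥0∞) := by rw [lintegral_const, measure_univ, mul_one]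
  have hweq : ∑ j : Fin w, ℙ (T ⁻¹' (B j)) = (w : ℝ≥0∞) * ℙ (T ⁻¹' (B 0)) := by
    rw [Finset.sum_congr rfl fun j _ => hswap j, Finset.sum_const, Finset.card_univ,
      Fintype.card_fin, nsmul_eq_mul]
  have hle : (w : ℝ≥0∞) * ℙ (T ⁻¹' (B 0)) ≤ ((w - K : ℕ) : ℝ≥0∞) := hweq ▸ hsum
  rw [hEvent]
  have hreal : (w : ℝ) * (ℙ (T ⁻¹' (B 0))).toReal ≤ ((w - K : ℕ) : ℝ) := by
    have h1 := ENNReal.toReal_mono (ENNReal.natCast_ne_top _) hle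
    rwa [ENNReal.toReal_mul, ENNReal.toReal_natCast, ENNReal.toReal_natCast] at h1
  have hKreal : (1 - α) * (w : ℝ) ≤ (K : ℝ) := Nat.le_ceil _
  have hcastsub : ((w - K : ℕ) : ℝ) = (w : ℝ) - (K : ℝ) := by
    rw [Nat.cast_sub hKw]
  have hfinal : (w : ℝ) * (ℙ (T ⁻¹' (B 0))).toReal ≤ (w : ℝ) * α := by
    rw [hcastsub] at hreal
    nlinarith
  exact le_of_mul_le_mul_left hfinal hwR
end

section
/- (Lemma A.1.) Suppose that for n → ∞ the random vector T^n = (T_1^n, ..., T_w^n) in ℝ^w converges in distribution to a vector T = (T_1, ..., T_w) of independent and identically distributed random variables each having an atomless (continuous) distribution. Then P(T_1^n > T^n_{[1−α]}) → ⌊αw⌋/w as n → ∞. -/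
open MeasureTheory ProbabilityTheory Filter
open scoped ENNReal NNReal

/-- Convergence in distribution (weak convergence of laws). -/
def ConvInDist {Ω E : Type*} [MeasureSpace Ω] [TopologicalSpace E] [MeasurableSpace E]
    (X : ℕ → Ω → E) (μ : Measure E) : Prop :=
  ∀ f : BoundedContinuousFunction E ℝ,
    Tendsto (fun n => ∫ ω, f (X n ω)) atTop (nhds (∫ x, f x ∂μ))

open scoped Classical

section Aux

variable {w : ℕ}

lemma orderStat_comp_perm (x : Fin w → ℝ) (τ : Equiv.Perm (Fin w)) (k : ℕ) :
    orderStat (x ∘ τ) k = orderStat x k := by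
  unfold orderStat
  split_ifs with h
  · exact congrFun Tuple.comp_perm_comp_sort_eq_comp_sort ⟨k - 1, h⟩
  · rfl

lemma orderStat_eq_of_monotone (y : Fin w → ℝ) (σ : Equiv.Perm (Fin w))
    (hmono : Monotone (y ∘ σ)) (k : ℕ) (h : k - 1 < w) :
    orderStat y k = y (σ ⟨k - 1, h⟩) := by
  unfold orderStat
  rw [dif_pos h]
  exact (congrFun (Tuple.comp_sort_eq_comp_iff_monotone.2 hmono) ⟨k - 1, h⟩).symm

/-- The event set. -/
def Aset (w : ℕ) [NeZero w] (k : ℕ) : Set (Fin w → ℝ) := {x | x 0 > orderStat x k}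

lemma Aset_eq [NeZero w] {k : ℕ} (hk1 : 1 ≤ k) (hkw : k ≤ w) :
    Aset w k = ⋃ S ∈ Finset.univ.powersetCard k, {x : Fin w → ℝ | ∀ i ∈ S, x i < x 0} := by
  have hk' : k - 1 < w := lt_of_lt_of_le (Nat.sub_lt (by omega) one_pos) hkw
  ext x
  have hmono : Monotone (x ∘ Tuple.sort x) := Tuple.monotone_sort x
  set σ := Tuple.sort x with hσ
  have hos : orderStat x k = x (σ ⟨k - 1, hk'⟩) := orderStat_eq_of_monotone x σ hmono k hk'
  constructor
  · intro hx
    simp only [Set.mem_iUnion, Set.mem_setOf_eq]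
    refine ⟨(Finset.Iic (⟨k - 1, hk'⟩ : Fin w)).image σ, ?_, ?_⟩
    · rw [Finset.mem_powersetCard_univ, Finset.card_image_of_injective _ σ.injective,
        Fin.card_Iic]
      have : ((⟨k - 1, hk'⟩ : Fin w) : ℕ) = k - 1 := rfl
      omega
    · intro i hi
      obtain ⟨r, hr, rfl⟩ := Finset.mem_image.1 hi
      have : x (σ r) ≤ x (σ ⟨k - 1, hk'⟩) := hmono (Finset.mem_Iic.1 hr)
      calc x (σ r) ≤ x (σ ⟨k - 1, hk'⟩) := this
        _ < x 0 := by rw [← hos]; exact hx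
  · intro hx
    simp only [Set.mem_iUnion, Set.mem_setOf_eq] at hx
    obtain ⟨S, hS, hSlt⟩ := hx
    rw [Finset.mem_powersetCard_univ] at hS
    have hex : ∃ i ∈ S, (⟨k - 1, hk'⟩ : Fin w) ≤ σ.symm i := by
      by_contra hc
      push_neg at hc
      have hsub : S.image σ.symm ⊆ Finset.Iio (⟨k - 1, hk'⟩ : Fin w) := by
        intro r hr
        obtain ⟨i, hi, rfl⟩ := Finset.mem_image.1 hr
        exact Finset.mem_Iio.2 (hc i hi)
      have := Finset.card_le_card hsub
      rw [Finset.card_image_of_injective _ σ.symm.injective, hS, Fin.card_Iio] at this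
      have h2 : ((⟨k - 1, hk'⟩ : Fin w) : ℕ) = k - 1 := rfl
      omega
    obtain ⟨i, hi, hle⟩ := hex
    show x 0 > orderStat x k
    calc orderStat x k = x (σ ⟨k - 1, hk'⟩) := hos
      _ ≤ x (σ (σ.symm i)) := hmono hle
      _ = x i := by rw [Equiv.apply_symm_apply]
      _ < x 0 := hSlt i hi

lemma isOpen_Aset [NeZero w] {k : ℕ} (hk1 : 1 ≤ k) (hkw : k ≤ w) : IsOpen (Aset w k) := by
  rw [Aset_eq hk1 hkw]
  refine isOpen_biUnion fun S _ => ?_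
  have : {x : Fin w → ℝ | ∀ i ∈ S, x i < x 0} = ⋂ i ∈ S, {x : Fin w → ℝ | x i < x 0} := by
    ext x; simp
  rw [this]
  exact isOpen_biInter_finset fun i _ =>
    isOpen_lt (continuous_apply i) (continuous_apply 0)

lemma count_gt [NeZero w] (x : Fin w → ℝ) (hx : Function.Injective x) {k : ℕ}
    (hk1 : 1 ≤ k) (hkw : k ≤ w) :
    (Finset.univ.filter fun i => orderStat x k < x i).card = w - k := by
  have hk' : k - 1 < w := lt_of_lt_of_le (Nat.sub_lt (by omega) one_pos) hkw
  set σ := Tuple.sort x with hσ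
  have hmono : Monotone (x ∘ σ) := Tuple.monotone_sort x
  have hsm : StrictMono (x ∘ σ) := hmono.strictMono_of_injective (hx.comp σ.injective)
  have hos : orderStat x k = x (σ ⟨k - 1, hk'⟩) := orderStat_eq_of_monotone x σ hmono k hk'
  have huniv : (Finset.univ : Finset (Fin w)) = Finset.univ.map σ.toEmbedding :=
    (Finset.map_univ_equiv σ).symm
  rw [huniv, Finset.filter_map, Finset.card_map]
  have h1 : (Finset.univ.filter fun r => orderStat x k < x (σ.toEmbedding r)) =
      Finset.univ.filter fun r => (⟨k - 1, hk'⟩ : Fin w) < r := by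
    apply Finset.filter_congr
    intro r _
    simp only [Equiv.coe_toEmbedding, hos]
    exact ⟨fun h => hsm.lt_iff_lt.1 h, fun h => hsm.lt_iff_lt.2 h⟩
  simp only [Function.comp_def]
  rw [h1]
  have h3 : (Finset.univ.filter fun r => (⟨k - 1, hk'⟩ : Fin w) < r) =
      Finset.Ioi (⟨k - 1, hk'⟩ : Fin w) := by
    ext r; simp
  rw [h3, Fin.card_Ioi]
  have h2 : ((⟨k - 1, hk'⟩ : Fin w) : ℕ) = k - 1 := rfl
  omega

lemma notMem_interior_compl {X : Type*} [TopologicalSpace X] {s : Set X} {x : X}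
    (h : x ∈ interior s) : x ∉ frontier s := by
  intro hf
  rw [frontier_eq_closure_inter_closure, closure_compl] at hf
  exact hf.2 h

lemma notMem_interior_compl' {X : Type*} [TopologicalSpace X] {s : Set X} {x : X}
    (h : x ∈ interior sᶜ) : x ∉ frontier s := by
  intro hf
  rw [← frontier_compl] at hf
  exact notMem_interior_compl h hf

lemma notMem_frontier_Aset [NeZero w] {k : ℕ} (hk1 : 1 ≤ k) (hkw : k ≤ w)
    {x : Fin w → ℝ} (hx : Function.Injective x) : x ∉ frontier (Aset w k) := by
  have hk' : k - 1 < w := lt_of_lt_of_le (Nat.sub_lt (by omega) one_pos) hkw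
  set σ := Tuple.sort x with hσ
  have hmono : Monotone (x ∘ σ) := Tuple.monotone_sort x
  have hsm : StrictMono (x ∘ σ) := hmono.strictMono_of_injective (hx.comp σ.injective)
  set V : Set (Fin w → ℝ) := {y | StrictMono (y ∘ σ)} with hV
  have hVopen : IsOpen V := by
    have : V = ⋂ (a : Fin w) (b : Fin w) (_ : a < b), {y : Fin w → ℝ | y (σ a) < y (σ b)} := by
      ext y
      simp only [hV, Set.mem_setOf_eq, Set.mem_iInter]
      exact ⟨fun h a b hab => h hab, fun h a b hab => h a b hab⟩
    rw [this]
    exact isOpen_iInter_of_finite fun a => isOpen_iInter_of_finite fun b =>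
      isOpen_iInter_of_finite fun _ =>
        isOpen_lt (continuous_apply (σ a)) (continuous_apply (σ b))
  have hxV : x ∈ V := hsm
  set j : Fin w := σ ⟨k - 1, hk'⟩ with hj
  have hkey : ∀ y ∈ V, (y ∈ Aset w k ↔ y j < y 0) := by
    intro y hy
    have : orderStat y k = y j := orderStat_eq_of_monotone y σ (hy.monotone) k hk'
    simp only [Aset, Set.mem_setOf_eq, this, gt_iff_lt]
  rcases lt_trichotomy (x j) (x 0) with hlt | heq | hgt
  · refine notMem_interior_compl (s := Aset w k) ?_
    rw [mem_interior]
    refine ⟨V ∩ {y | y j < y 0}, ?_,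
      hVopen.inter (isOpen_lt (continuous_apply j) (continuous_apply 0)), ⟨hxV, hlt⟩⟩
    rintro y ⟨hyV, hylt⟩
    exact (hkey y hyV).2 hylt
  · have hj0 : j = 0 := hx heq
    refine notMem_interior_compl' (s := Aset w k) ?_
    rw [mem_interior]
    refine ⟨V, ?_, hVopen, hxV⟩
    intro y hyV hyA
    have := (hkey y hyV).1 hyA
    rw [hj0] at this
    exact lt_irrefl _ this
  · refine notMem_interior_compl' (s := Aset w k) ?_
    rw [mem_interior]
    refine ⟨V ∩ {y | y 0 < y j}, ?_,
      hVopen.inter (isOpen_lt (continuous_apply 0) (continuous_apply j)), ⟨hxV, hgt⟩⟩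
    rintro y ⟨hyV, hygt⟩ hyA
    exact lt_asymm hygt ((hkey y hyV).1 hyA)

lemma measurePreserving_comp_perm (m : Measure ℝ) [SigmaFinite m] (τ : Equiv.Perm (Fin w)) :
    MeasurePreserving (fun x : Fin w → ℝ => x ∘ τ)
      (Measure.pi fun _ => m) (Measure.pi fun _ => m) := by
  have h := measurePreserving_piCongrLeft (fun _ : Fin w => m) (τ.symm : Fin w ≃ Fin w)
  have heq : ⇑(MeasurableEquiv.piCongrLeft (fun _ : Fin w => ℝ)
      (τ.symm : Fin w ≃ Fin w)) = fun x => x ∘ τ := by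
    funext x
    funext i
    have h2 := MeasurableEquiv.piCongrLeft_apply_apply (β := fun _ : Fin w => ℝ)
      (τ.symm : Fin w ≃ Fin w) x (τ i)
    simpa using h2
  rwa [heq] at h

lemma diag_null (m : Measure ℝ) [IsProbabilityMeasure m] (hm : ∀ x : ℝ, m {x} = 0)
    {i j : Fin w} (hij : i ≠ j) :
    (Measure.pi fun _ : Fin w => m) {x | x i = x j} = 0 := by
  set μ := Measure.pi fun _ : Fin w => m with hμ
  have hφ : Measurable (fun x : Fin w → ℝ => (x i, x j)) :=
    (measurable_pi_apply i).prodMk (measurable_pi_apply j)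
  have hmap : μ.map (fun x : Fin w → ℝ => (x i, x j)) = m.prod m := by
    refine (Measure.prod_eq (μ := m) (ν := m) fun s t hs ht => ?_).symm
    rw [Measure.map_apply hφ (hs.prod ht)]
    have hset : (fun x : Fin w → ℝ => (x i, x j)) ⁻¹' (s ×ˢ t) =
        Set.pi Set.univ (fun l => if l = i then s else if l = j then t else Set.univ) := by
      ext x
      simp only [Set.mem_preimage, Set.mem_prod, Set.mem_pi, Set.mem_univ, forall_true_left]
      constructor
      · rintro ⟨h1, h2⟩ l
        split_ifs with hl1 hl2
        · subst hl1; exact h1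
        · subst hl2; exact h2
        · trivial
      · intro h
        refine ⟨?_, ?_⟩
        · have := h i; simpa using this
        · have := h j
          rw [if_neg (Ne.symm hij), if_pos rfl] at this
          exact this
    rw [hset, Measure.pi_pi]
    have hprod : ∏ l : Fin w, m (if l = i then s else if l = j then t else Set.univ) =
        ∏ l ∈ ({i, j} : Finset (Fin w)),
          m (if l = i then s else if l = j then t else Set.univ) := by
      refine (Finset.prod_subset (Finset.subset_univ _) ?_).symm
      intro l _ hl
      simp only [Finset.mem_insert, Finset.mem_singleton, not_or] at hl
      rw [if_neg hl.1, if_neg hl.2, measure_univ]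
    rw [hprod, Finset.prod_pair hij, if_pos rfl, if_neg (Ne.symm hij), if_pos rfl]
  have hdiag : MeasurableSet {p : ℝ × ℝ | p.1 = p.2} :=
    (isClosed_eq continuous_fst continuous_snd).measurableSet
  have h4 : μ {x | x i = x j} = (m.prod m) {p : ℝ × ℝ | p.1 = p.2} := by
    rw [← hmap, Measure.map_apply hφ hdiag]
    rfl
  rw [h4, Measure.prod_apply hdiag]
  have h5 : ∀ a : ℝ, m (Prod.mk a ⁻¹' {p : ℝ × ℝ | p.1 = p.2}) = 0 := by
    intro a
    have : Prod.mk a ⁻¹' {p : ℝ × ℝ | p.1 = p.2} = {a} := by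
      ext b; simp [eq_comm]
    rw [this]; exact hm a
  rw [lintegral_congr h5]
  simp

lemma not_injective_eq (w : ℕ) : {x : Fin w → ℝ | ¬ Function.Injective x} =
    ⋃ (i : Fin w) (j : Fin w) (_ : i ≠ j), {x | x i = x j} := by
  ext x
  simp only [Set.mem_setOf_eq, Set.mem_iUnion]
  constructor
  · intro hx
    simp only [Function.Injective, not_forall] at hx
    obtain ⟨i, j, hxij, hij⟩ := hx
    exact ⟨i, j, hij, hxij⟩
  · rintro ⟨i, j, hij, hxij⟩ hinj
    exact hij (hinj hxij)

lemma not_injective_null (m : Measure ℝ) [IsProbabilityMeasure m] (hm : ∀ x : ℝ, m {x} = 0) :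
    (Measure.pi fun _ : Fin w => m) {x | ¬ Function.Injective x} = 0 := by
  rw [not_injective_eq]
  exact measure_iUnion_null fun i => measure_iUnion_null fun j => measure_iUnion_null fun hij =>
    diag_null m hm hij

lemma measurableSet_injective (w : ℕ) :
    MeasurableSet {x : Fin w → ℝ | Function.Injective x} := by
  have h : {x : Fin w → ℝ | Function.Injective x} = {x | ¬ Function.Injective x}ᶜ := by
    ext x; simp
  rw [h, not_injective_eq]
  refine (MeasurableSet.iUnion fun i => MeasurableSet.iUnion fun j =>
    MeasurableSet.iUnion fun _ => ?_).compl
  exact (isClosed_eq (continuous_apply i) (continuous_apply j)).measurableSet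

lemma measure_Aset [NeZero w] (m : Measure ℝ) [IsProbabilityMeasure m]
    (hm : ∀ x : ℝ, m {x} = 0) {k : ℕ} (hk1 : 1 ≤ k) (hkw : k ≤ w) :
    (Measure.pi fun _ : Fin w => m) (Aset w k) = ((w - k : ℕ) : ℝ≥0∞) / (w : ℝ≥0∞) := by
  set μ := Measure.pi fun _ : Fin w => m with hμ
  haveI : IsProbabilityMeasure μ := by rw [hμ]; infer_instance
  set D := {x : Fin w → ℝ | Function.Injective x} with hDdef
  have hD : μ Dᶜ = 0 := by
    have : Dᶜ = {x | ¬ Function.Injective x} := by ext x; simp [hDdef]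
    rw [this]
    exact not_injective_null m hm
  have hDmeas : MeasurableSet D := measurableSet_injective w
  set A := fun i : Fin w => {x : Fin w → ℝ | orderStat x k < x i} with hA
  have hApre : ∀ i, A i = (fun x : Fin w → ℝ => x ∘ (Equiv.swap 0 i)) ⁻¹' (Aset w k) := by
    intro i
    ext x
    simp only [hA, Set.mem_preimage, Aset, Set.mem_setOf_eq, gt_iff_lt]
    rw [orderStat_comp_perm]
    have : (x ∘ (Equiv.swap 0 i)) 0 = x i := by
      simp [Function.comp, Equiv.swap_apply_left]
    rw [this]
  have hmeasmap : ∀ i : Fin w, Measurable (fun x : Fin w → ℝ => x ∘ (Equiv.swap 0 i)) :=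
    fun i => measurable_pi_lambda _ fun j => measurable_pi_apply _
  have hmeasA : ∀ i, MeasurableSet (A i) := by
    intro i
    rw [hApre]
    exact (hmeasmap i) (isOpen_Aset hk1 hkw).measurableSet
  have hμA : ∀ i, μ (A i) = μ (Aset w k) := by
    intro i
    rw [hApre]
    exact (measurePreserving_comp_perm m (Equiv.swap 0 i)).measure_preimage
      (isOpen_Aset hk1 hkw).measurableSet.nullMeasurableSet
  have hsum1 : ∑ _i : Fin w, μ (Aset w k) = (w : ℝ≥0∞) * μ (Aset w k) := by
    rw [Finset.sum_const, Finset.card_univ, Fintype.card_fin, nsmul_eq_mul]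
  have hsuma : ∑ i : Fin w, μ (A i ∩ D) = (w : ℝ≥0∞) * μ (Aset w k) := by
    rw [← hsum1]
    exact Finset.sum_congr rfl fun i _ => by rw [measure_inter_conull hD, hμA]
  have hsumb : ∑ i : Fin w, μ (A i ∩ D) = ((w - k : ℕ) : ℝ≥0∞) := by
    have hint : ∀ i : Fin w, μ (A i ∩ D) =
        ∫⁻ x, ((A i ∩ D).indicator (fun _ => (1 : ℝ≥0∞))) x ∂μ := by
      intro i
      rw [lintegral_indicator ((hmeasA i).inter hDmeas)]
      simp
    rw [Finset.sum_congr rfl fun i _ => hint i,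
      ← lintegral_finset_sum _ fun i _ => measurable_const.indicator ((hmeasA i).inter hDmeas)]
    have hpt : ∀ x, (∑ i : Fin w, ((A i ∩ D).indicator (fun _ => (1 : ℝ≥0∞))) x) =
        D.indicator (fun _ => ((w - k : ℕ) : ℝ≥0∞)) x := by
      intro x
      by_cases hxD : x ∈ D
      · have h1 : ∀ i : Fin w, ((A i ∩ D).indicator (fun _ => (1 : ℝ≥0∞))) x =
            if orderStat x k < x i then 1 else 0 := by
          intro i
          simp [Set.indicator_apply, Set.mem_inter_iff, hxD, hA, Set.mem_setOf_eq]
        rw [Finset.sum_congr rfl fun i _ => h1 i, Set.indicator_of_mem hxD, Finset.sum_boole,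
          count_gt x hxD hk1 hkw]
      · have h1 : ∀ i : Fin w, ((A i ∩ D).indicator (fun _ => (1 : ℝ≥0∞))) x = 0 := by
          intro i
          apply Set.indicator_of_notMem
          exact fun hc => hxD hc.2
        rw [Finset.sum_congr rfl fun i _ => h1 i, Set.indicator_of_notMem hxD]
        simp
    rw [lintegral_congr hpt, lintegral_indicator hDmeas, setLIntegral_const]
    have hD1 : μ D = 1 := by
      have := prob_compl_eq_zero_iff (μ := μ) hDmeas
      exact this.1 hD
    rw [hD1, mul_one]
  have hw0 : (w : ℝ≥0∞) ≠ 0 := by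
    simp [NeZero.ne w]
  have hwt : (w : ℝ≥0∞) ≠ ⊤ := ENNReal.natCast_ne_top w
  rw [ENNReal.eq_div_iff hw0 hwt, ← hsuma, hsumb]

end Aux

/-- **Lemma A.1.** If the random vector `T^n = (T_1^n, ..., T_w^n)` converges in
distribution to a vector of i.i.d. variables with a common atomless law `m`, then
`P(T_1^n > T^n_{[1-α]}) → ⌊αw⌋/w`. -/
theorem statement10
    {Ω : Type*} [MeasureSpace Ω] [IsProbabilityMeasure (ℙ : Measure Ω)]
    (w : ℕ) [NeZero w] (hw : 2 ≤ w) (α : ℝ) (hα : α ∈ Set.Ico (0 : ℝ) 1)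
    (T : ℕ → Ω → Fin w → ℝ) (hT_meas : ∀ n, Measurable (T n))
    (m : Measure ℝ) [IsProbabilityMeasure m]
    (hm_atomless : ∀ x : ℝ, m {x} = 0)
    (hconv : ConvInDist T (Measure.pi fun _ : Fin w => m)) :
    Tendsto (fun n =>
        (ℙ {ω | T n ω 0 > orderStat (T n ω) ⌈(1 - α) * (w : ℝ)⌉₊}).toReal)
      atTop (nhds ((⌊α * (w : ℝ)⌋ : ℝ) / w)) := by
  obtain ⟨hα0, hα1⟩ := hα
  have hwpos : 0 < w := Nat.pos_of_ne_zero (NeZero.ne w)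
  have hwR : (0 : ℝ) < w := by exact_mod_cast hwpos
  set k := ⌈(1 - α) * (w : ℝ)⌉₊ with hk
  have hk1 : 1 ≤ k := Nat.one_le_ceil_iff.2 (by nlinarith)
  have hkw : k ≤ w := Nat.ceil_le.2 (by nlinarith)
  set μ := Measure.pi fun _ : Fin w => m with hμdef
  haveI : IsProbabilityMeasure μ := by rw [hμdef]; infer_instance
  have hAmeas : MeasurableSet (Aset w k) := (isOpen_Aset hk1 hkw).measurableSet
  have hfront : μ (frontier (Aset w k)) = 0 := by
    refine measure_mono_null ?_ (not_injective_null m hm_atomless)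
    intro x hx
    simp only [Set.mem_setOf_eq]
    intro hinj
    exact notMem_frontier_Aset hk1 hkw hinj hx
  haveI hprob : ∀ n, IsProbabilityMeasure ((ℙ : Measure Ω).map (T n)) := fun n =>
    Measure.isProbabilityMeasure_map (hT_meas n).aemeasurable
  set P : ℕ → ProbabilityMeasure (Fin w → ℝ) := fun n => ⟨(ℙ : Measure Ω).map (T n), hprob n⟩
    with hP
  set Q : ProbabilityMeasure (Fin w → ℝ) := ⟨μ, inferInstance⟩ with hQ
  have htend : Tendsto P atTop (nhds Q) := by
    rw [ProbabilityMeasure.tendsto_iff_forall_integral_tendsto]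
    intro f
    have h2 : (fun n => ∫ x, f x ∂(P n : Measure (Fin w → ℝ))) =
        fun n => ∫ ω, f (T n ω) ∂(ℙ : Measure Ω) := by
      funext n
      exact integral_map (hT_meas n).aemeasurable f.continuous.aestronglyMeasurable
    rw [h2]
    exact hconv f
  have key := ProbabilityMeasure.tendsto_measure_of_null_frontier_of_tendsto' htend hfront
  have hμA : μ (Aset w k) = ((w - k : ℕ) : ℝ≥0∞) / (w : ℝ≥0∞) :=
    measure_Aset m hm_atomless hk1 hkw
  have hne : μ (Aset w k) ≠ ⊤ := measure_ne_top _ _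
  have key2 := (ENNReal.tendsto_toReal hne).comp key
  have hfun : (fun n => (((P n : Measure (Fin w → ℝ))) (Aset w k)).toReal) =
      fun n => (ℙ {ω | T n ω 0 > orderStat (T n ω) k}).toReal := by
    funext n
    have h3 : ((ℙ : Measure Ω).map (T n)) (Aset w k) = ℙ (T n ⁻¹' (Aset w k)) :=
      Measure.map_apply (hT_meas n) hAmeas
    have h4 : (P n : Measure (Fin w → ℝ)) = (ℙ : Measure Ω).map (T n) := rfl
    rw [h4, h3]
    rfl
  have hlim : (μ (Aset w k)).toReal = (⌊α * (w : ℝ)⌋ : ℝ) / w := by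
    rw [hμA, ENNReal.toReal_div]
    simp only [ENNReal.toReal_natCast]
    congr 1
    have hceil : (k : ℤ) = ⌈(1 - α) * (w : ℝ)⌉ := by
      rw [hk]
      exact Int.natCast_ceil_eq_ceil (by nlinarith)
    have h5 : ⌈(1 - α) * (w : ℝ)⌉ = (w : ℤ) - ⌊α * (w : ℝ)⌋ := by
      rw [show (1 - α) * (w : ℝ) = -(α * (w : ℝ)) + ((w : ℤ) : ℝ) by push_cast; ring,
        Int.ceil_add_intCast, Int.ceil_neg]
      ring
    have h6 : (k : ℝ) = (w : ℝ) - ((⌊α * (w : ℝ)⌋ : ℤ) : ℝ) := by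
      have := hceil.trans h5
      exact_mod_cast congrArg (fun z : ℤ => (z : ℝ)) this
    rw [Nat.cast_sub hkw]
    linarith
  have key3 : Tendsto (fun n => (((P n : Measure (Fin w → ℝ))) (Aset w k)).toReal) atTop
      (nhds ((μ (Aset w k)).toReal)) := key2
  rw [hfun, hlim] at key3
  exact key3
end

section
/- (Monte Carlo testing principle.) Let T_1, ..., T_w be independent and identically distributed real random variables whose common distribution is atomless (continuous). Then for any α ∈ [0,1), P(T_1 > T_{(⌈(1−α)w⌉)}) = ⌊αw⌋/w. -/
open MeasureTheory ProbabilityTheory Filter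
open scoped ENNReal NNReal

/-- The rank (number of strictly smaller values) of coordinate `i`. -/
noncomputable def mcRank {w : ℕ} (x : Fin w → ℝ) (i : Fin w) : ℕ :=
  (Finset.univ.filter fun j => x j < x i).card

lemma card_filter_comp_perm {w : ℕ} (e : Equiv.Perm (Fin w)) (P : Fin w → Prop)
    [DecidablePred P] :
    (Finset.univ.filter fun j => P (e j)).card = (Finset.univ.filter P).card := by
  rw [← Finset.card_image_of_injective (Finset.univ.filter fun j => P (e j)) e.injective]
  congr 1
  ext j
  simp only [Finset.mem_image, Finset.mem_filter, Finset.mem_univ, true_and]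
  constructor
  · rintro ⟨a, ha, rfl⟩; exact ha
  · intro h; exact ⟨e.symm j, by simpa using h, by simp⟩

lemma mcRank_comp {w : ℕ} (x : Fin w → ℝ) (e : Equiv.Perm (Fin w)) (i : Fin w) :
    mcRank (x ∘ e) i = mcRank x (e i) :=
  card_filter_comp_perm e fun j => x j < x (e i)

lemma mcRank_eq_sortSymm {w : ℕ} (x : Fin w → ℝ) (hx : Function.Injective x) (i : Fin w) :
    mcRank x i = (((Tuple.sort x)⁻¹ i : Fin w) : ℕ) := by
  set σ := Tuple.sort x with hσ
  have hsm : StrictMono (x ∘ σ) :=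
    (Tuple.monotone_sort x).strictMono_of_injective (hx.comp σ.injective)
  have himg : Finset.univ.filter (fun j => x j < x i)
      = (Finset.Iio (σ⁻¹ i)).image σ := by
    ext j
    simp only [Finset.mem_filter, Finset.mem_univ, true_and, Finset.mem_image, Finset.mem_Iio]
    constructor
    · intro hj
      refine ⟨σ⁻¹ j, ?_, by simp⟩
      have h2 : (x ∘ σ) (σ⁻¹ j) < (x ∘ σ) (σ⁻¹ i) := by
        simpa using hj
      exact hsm.lt_iff_lt.mp h2
    · rintro ⟨m, hm, rfl⟩
      have h2 : (x ∘ σ) m < (x ∘ σ) (σ⁻¹ i) := hsm (by exact hm)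
      simpa using h2
  rw [mcRank, himg, Finset.card_image_of_injective _ σ.injective, Fin.card_Iio]

lemma card_rank_ge {w : ℕ} (x : Fin w → ℝ) (hx : Function.Injective x) {k : ℕ} (hkw : k ≤ w) :
    (Finset.univ.filter fun i => k ≤ mcRank x i).card = w - k := by
  set σ := Tuple.sort x with hσ
  have h1 : (Finset.univ.filter fun i => k ≤ mcRank x i)
      = Finset.univ.filter fun i => k ≤ ((σ⁻¹ i : Fin w) : ℕ) := by
    apply Finset.filter_congr
    intro i _
    simp [mcRank_eq_sortSymm x hx i, hσ]
  have h2 : (Finset.univ.filter fun i => k ≤ ((σ⁻¹ i : Fin w) : ℕ)).card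
      = (Finset.univ.filter fun m : Fin w => k ≤ (m : ℕ)).card :=
    card_filter_comp_perm (σ⁻¹ : Equiv.Perm (Fin w)) (fun m => k ≤ (m : ℕ))
  have h3 : (Finset.univ.filter fun m : Fin w => (m : ℕ) < k)
      = Finset.univ.image (Fin.castLE hkw) := by
    ext m
    simp only [Finset.mem_filter, Finset.mem_univ, true_and, Finset.mem_image]
    constructor
    · intro hm; exact ⟨⟨(m : ℕ), hm⟩, Fin.val_injective rfl⟩
    · rintro ⟨a, -, rfl⟩; simpa using a.isLt
  have h4 : (Finset.univ.filter fun m : Fin w => (m : ℕ) < k).card = k := by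
    rw [h3, Finset.card_image_of_injective _ (Fin.castLE_injective hkw), Finset.card_univ,
      Fintype.card_fin]
  have h5 := Finset.card_filter_add_card_filter_not
    (s := (Finset.univ : Finset (Fin w))) (p := fun m : Fin w => (m : ℕ) < k)
  have h6 : (Finset.univ.filter fun m : Fin w => ¬ (m : ℕ) < k)
      = Finset.univ.filter fun m : Fin w => k ≤ (m : ℕ) := by
    apply Finset.filter_congr; intro m _; simp [not_lt]
  rw [h6, h4, Finset.card_univ, Fintype.card_fin] at h5
  rw [h1, h2]
  omega

lemma gt_orderStat_iff {w : ℕ} (x : Fin w → ℝ) (hx : Function.Injective x) {k : ℕ}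
    (hk1 : 1 ≤ k) (hkw : k ≤ w) (i : Fin w) :
    x i > orderStat x k ↔ k ≤ mcRank x i := by
  have hlt : k - 1 < w := by omega
  have hsm : StrictMono (x ∘ Tuple.sort x) :=
    (Tuple.monotone_sort x).strictMono_of_injective (hx.comp (Tuple.sort x).injective)
  rw [orderStat, dif_pos hlt, mcRank_eq_sortSymm x hx i]
  have hxi : x i = x (Tuple.sort x ((Tuple.sort x)⁻¹ i)) := by simp
  rw [gt_iff_lt, hxi]
  have hiff : (x ∘ Tuple.sort x) ⟨k - 1, hlt⟩ < (x ∘ Tuple.sort x) ((Tuple.sort x)⁻¹ i)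
      ↔ (⟨k - 1, hlt⟩ : Fin w) < (Tuple.sort x)⁻¹ i := hsm.lt_iff_lt
  constructor
  · intro h
    have := hiff.mp h
    rw [Fin.lt_def] at this
    simp only [] at this
    omega
  · intro h
    exact hiff.mpr (by rw [Fin.lt_def]; simp only []; omega)

lemma measurable_mcRank {w : ℕ} (i : Fin w) : Measurable fun x : Fin w → ℝ => mcRank x i := by
  have h : (fun x : Fin w → ℝ => mcRank x i)
      = fun x => ∑ j : Fin w, if x j < x i then 1 else 0 := by
    funext x; rw [mcRank, Finset.card_filter]
  rw [h]
  exact Finset.measurable_sum _ fun j _ =>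
    Measurable.ite (measurableSet_lt (measurable_pi_apply j) (measurable_pi_apply i))
      measurable_const measurable_const

/-- **Monte Carlo testing principle.** If `T_1, ..., T_w` are i.i.d. with an atomless
common law, then `P(T_1 > T_{(⌈(1-α)w⌉)}) = ⌊αw⌋/w` for every `α ∈ [0,1)`. -/
theorem statement16
    {Ω : Type*} [MeasureSpace Ω] [IsProbabilityMeasure (ℙ : Measure Ω)]
    (w : ℕ) [NeZero w] (hw : 2 ≤ w)
    (T : Fin w → Ω → ℝ)
    (hT_meas : ∀ j, Measurable (T j))
    (hT_indep : iIndepFun T ℙ)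
    (hT_ident : ∀ j, Measure.map (T j) ℙ = Measure.map (T 0) ℙ)
    (hT_atomless : ∀ x : ℝ, Measure.map (T 0) ℙ {x} = 0)
    (α : ℝ) (hα : α ∈ Set.Ico (0 : ℝ) 1) :
    (ℙ {ω | T 0 ω > orderStat (fun j : Fin w => T j ω) ⌈(1 - α) * (w : ℝ)⌉₊}).toReal =
      (⌊α * (w : ℝ)⌋ : ℝ) / w := by
  classical
  set k : ℕ := ⌈(1 - α) * (w : ℝ)⌉₊ with hk
  have hw0 : (0 : ℝ) < w := by exact_mod_cast Nat.pos_of_ne_zero (NeZero.ne w)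
  have hk1 : 1 ≤ k := Nat.one_le_ceil_iff.mpr (by nlinarith [hα.1, hα.2])
  have hkw : k ≤ w := Nat.ceil_le.mpr (by nlinarith [hα.1, hα.2])
  set μ : Measure ℝ := Measure.map (T 0) ℙ with hμ
  haveI : IsProbabilityMeasure μ := Measure.isProbabilityMeasure_map (hT_meas 0).aemeasurable
  set f : Ω → (Fin w → ℝ) := fun ω j => T j ω with hfdef
  have hf : Measurable f := measurable_pi_lambda _ hT_meas
  set ν : Measure (Fin w → ℝ) := Measure.pi (fun _ : Fin w => μ) with hν
  haveI : IsProbabilityMeasure ν := by rw [hν]; infer_instance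
  -- joint law is the product measure
  have hmap : Measure.map f ℙ = ν := by
    refine (Measure.pi_eq fun s hs => ?_).symm
    rw [Measure.map_apply hf (MeasurableSet.univ_pi hs)]
    have hpre : f ⁻¹' Set.pi Set.univ s = ⋂ i ∈ Finset.univ, T i ⁻¹' s i := by
      ext ω
      simp [hfdef, Set.mem_pi]
    rw [hpre, hT_indep.measure_inter_preimage_eq_mul Finset.univ (fun i _ => hs i)]
    refine Finset.prod_congr rfl fun i _ => ?_
    rw [← hT_ident i, Measure.map_apply (hT_meas i) (hs i)]
  -- permutation invariance of ν
  have hperm : ∀ e : Equiv.Perm (Fin w),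
      Measure.map (fun x : Fin w → ℝ => x ∘ e) ν = ν := by
    intro e
    have hg : Measurable fun x : Fin w → ℝ => x ∘ e :=
      measurable_pi_lambda _ fun j => measurable_pi_apply (e j)
    refine (Measure.pi_eq fun s hs => ?_).symm
    rw [Measure.map_apply hg (MeasurableSet.univ_pi hs)]
    have hpre : (fun x : Fin w → ℝ => x ∘ e) ⁻¹' Set.pi Set.univ s
        = Set.pi Set.univ fun j => s (e.symm j) := by
      ext x
      simp only [Set.mem_preimage, Set.mem_pi, Set.mem_univ, true_implies, Function.comp]
      constructor
      · intro h j; simpa using h (e.symm j)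
      · intro h i; simpa using h (e i)
    rw [hpre, hν, Measure.pi_pi]
    exact (Equiv.prod_comp e.symm fun j => μ (s j))
  -- non-injectivity is null
  have hrep : {x : Fin w → ℝ | ¬ Function.Injective x}
      = ⋃ (i : Fin w), ⋃ (j : Fin w), ⋃ (_ : i ≠ j), {x : Fin w → ℝ | x i = x j} := by
    ext x
    simp only [Set.mem_setOf_eq, Set.mem_iUnion, Function.Injective]
    push_neg
    constructor
    · rintro ⟨i, j, hij, hne⟩; exact ⟨i, j, hne, hij⟩
    · rintro ⟨i, j, hne, hij⟩; exact ⟨i, j, hij, hne⟩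
  have hDc_meas : MeasurableSet {x : Fin w → ℝ | ¬ Function.Injective x} := by
    rw [hrep]
    exact MeasurableSet.iUnion fun i => .iUnion fun j => .iUnion fun _ =>
      measurableSet_eq_fun (measurable_pi_apply i) (measurable_pi_apply j)
  have hdiag : ∀ i j : Fin w, i ≠ j → ν {x : Fin w → ℝ | x i = x j} = 0 := by
    intro i j hij
    have hmeas_ij : MeasurableSet {x : Fin w → ℝ | x i = x j} :=
      measurableSet_eq_fun (measurable_pi_apply i) (measurable_pi_apply j)
    rw [← hmap, Measure.map_apply hf hmeas_ij]
    have hpair : Measure.map (fun ω => (T i ω, T j ω)) ℙ = μ.prod μ := by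
      have h := (indepFun_iff_map_prod_eq_prod_map_map (hT_meas i).aemeasurable
        (hT_meas j).aemeasurable).mp (hT_indep.indepFun hij)
      rwa [hT_ident i, hT_ident j] at h
    have hdm : MeasurableSet {p : ℝ × ℝ | p.1 = p.2} :=
      measurableSet_eq_fun measurable_fst measurable_snd
    have hpre : f ⁻¹' {x : Fin w → ℝ | x i = x j}
        = (fun ω => (T i ω, T j ω)) ⁻¹' {p : ℝ × ℝ | p.1 = p.2} := rfl
    rw [hpre, ← Measure.map_apply ((hT_meas i).prodMk (hT_meas j)) hdm, hpair,
      Measure.prod_apply hdm]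
    have hz : ∀ a : ℝ, μ (Prod.mk a ⁻¹' {p : ℝ × ℝ | p.1 = p.2}) = 0 := by
      intro a
      have : (Prod.mk a ⁻¹' {p : ℝ × ℝ | p.1 = p.2}) = {a} := by
        ext b; simp [eq_comm]
      rw [this, hμ]
      exact hT_atomless a
    calc ∫⁻ a, μ (Prod.mk a ⁻¹' {p : ℝ × ℝ | p.1 = p.2}) ∂μ = ∫⁻ _, 0 ∂μ := by
          exact lintegral_congr fun a => hz a
      _ = 0 := lintegral_zero
  have hDc0 : ν {x : Fin w → ℝ | ¬ Function.Injective x} = 0 := by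
    rw [hrep]
    exact measure_iUnion_null fun i => measure_iUnion_null fun j =>
      measure_iUnion_null fun hij => hdiag i j hij
  -- the rank events
  set A : Fin w → Set (Fin w → ℝ) := fun i => {x | k ≤ mcRank x i} with hA_def
  have hA : ∀ i, MeasurableSet (A i) := by
    intro i
    have : A i = (fun x => mcRank x i) ⁻¹' (Set.Ici k) := rfl
    rw [this]
    exact measurable_mcRank i (measurableSet_Ici)
  have hAeq : ∀ i : Fin w, ν (A i) = ν (A 0) := by
    intro i
    set e : Equiv.Perm (Fin w) := Equiv.swap (0 : Fin w) i with he
    have hg : Measurable fun x : Fin w → ℝ => x ∘ e :=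
      measurable_pi_lambda _ fun j => measurable_pi_apply (e j)
    have hpre : (fun x : Fin w → ℝ => x ∘ e) ⁻¹' A 0 = A i := by
      ext x
      simp only [Set.mem_preimage, hA_def, Set.mem_setOf_eq]
      rw [mcRank_comp x e 0, he, Equiv.swap_apply_left]
    calc ν (A i) = ν ((fun x : Fin w → ℝ => x ∘ e) ⁻¹' A 0) := by rw [hpre]
      _ = (Measure.map (fun x : Fin w → ℝ => x ∘ e) ν) (A 0) :=
          (Measure.map_apply hg (hA 0)).symm
      _ = ν (A 0) := by rw [hperm e]
  -- summing the rank events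
  have hsum : (w : ℝ≥0∞) * ν (A 0) = ((w - k : ℕ) : ℝ≥0∞) := by
    have hae_inj : ∀ᵐ x ∂ν, Function.Injective x := by
      rw [ae_iff]
      exact hDc0
    calc (w : ℝ≥0∞) * ν (A 0) = ∑ _i : Fin w, ν (A 0) := by
          simp [Finset.sum_const, Finset.card_univ, mul_comm]
      _ = ∑ i : Fin w, ν (A i) := (Finset.sum_congr rfl fun i _ => (hAeq i).symm)
      _ = ∑ i : Fin w, ∫⁻ x, (A i).indicator 1 x ∂ν :=
          Finset.sum_congr rfl fun i _ => (lintegral_indicator_one (hA i)).symm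
      _ = ∫⁻ x, ∑ i : Fin w, (A i).indicator 1 x ∂ν :=
          (lintegral_finset_sum _ fun i _ => measurable_one.indicator (hA i)).symm
      _ = ∫⁻ _x, ((w - k : ℕ) : ℝ≥0∞) ∂ν := by
          refine lintegral_congr_ae ?_
          filter_upwards [hae_inj] with x hx
          have hcard : ∑ i : Fin w, (A i).indicator (1 : (Fin w → ℝ) → ℝ≥0∞) x
              = ((Finset.univ.filter fun i => k ≤ mcRank x i).card : ℝ≥0∞) := by
            rw [Finset.card_filter]
            push_cast
            refine Finset.sum_congr rfl fun i _ => ?_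
            by_cases h : k ≤ mcRank x i
            · simp [Set.indicator_apply, hA_def, h]
            · simp [Set.indicator_apply, hA_def, h]
          rw [hcard, card_rank_ge x hx hkw]
      _ = ((w - k : ℕ) : ℝ≥0∞) := by simp
  -- identifying the target event
  have hae : ∀ᵐ ω ∂ℙ, Function.Injective (f ω) := by
    rw [ae_iff]
    have : {ω | ¬ Function.Injective (f ω)}
        = f ⁻¹' {x : Fin w → ℝ | ¬ Function.Injective x} := rfl
    rw [this, ← Measure.map_apply hf hDc_meas, hmap]
    exact hDc0
  have hsetseq : {ω | T 0 ω > orderStat (fun j : Fin w => T j ω) k} =ᵐ[ℙ] f ⁻¹' A 0 := by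
    have h := hae
    rw [Filter.eventuallyEq_set]
    filter_upwards [hae] with ω hω
    simp only [Set.mem_setOf_eq, Set.mem_preimage, hA_def]
    exact gt_orderStat_iff (f ω) hω hk1 hkw 0
  have hP : ℙ {ω | T 0 ω > orderStat (fun j : Fin w => T j ω) k} = ν (A 0) := by
    rw [measure_congr hsetseq, ← hmap, Measure.map_apply hf (hA 0)]
  -- arithmetic
  have harith : ((w - k : ℕ) : ℝ) = (⌊α * (w : ℝ)⌋ : ℝ) := by
    have h0 : (0 : ℝ) ≤ (1 - α) * w := by nlinarith [hα.1, hα.2]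
    have hceil : (k : ℤ) = (w : ℤ) - ⌊α * (w : ℝ)⌋ := by
      have h1 : (k : ℤ) = ⌈(1 - α) * (w : ℝ)⌉ := Int.natCast_ceil_eq_ceil h0
      have h2 : ((1 - α) * (w : ℝ)) = -(α * (w : ℝ)) + ((w : ℤ) : ℝ) := by push_cast; ring
      rw [h1, h2, Int.ceil_add_intCast, Int.ceil_neg]
      ring
    have hZ : ((w - k : ℕ) : ℤ) = ⌊α * (w : ℝ)⌋ := by
      rw [Nat.cast_sub hkw, hceil]; ring
    exact_mod_cast congrArg (Int.cast : ℤ → ℝ) hZ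
  -- conclusion
  have hne : ν (A 0) ≠ ∞ := measure_ne_top ν (A 0)
  have htr : (w : ℝ) * (ν (A 0)).toReal = ((w - k : ℕ) : ℝ) := by
    have := congrArg ENNReal.toReal hsum
    rwa [ENNReal.toReal_mul, ENNReal.toReal_natCast, ENNReal.toReal_natCast] at this
  rw [hP]
  rw [eq_div_iff (ne_of_gt hw0)]
  rw [← harith]
  linarith [htr]
end
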